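/- Let $k < n$ be integers and let $h \in L_p(\mathbb{R}^d)$ with $h \ge 0$, $1 \le p \le \infty$. With $M_{k,n}$ as above and $h_n = \mathsf{E}_n h$ the conditional expectation of $h$ onto the $\sigma$-algebra generated by dyadic cubes of side length $2^{-n}$, one has $\|M_{k,n} h\|_p \le C_d \, 2^{k-n} \|h_n\|_p$. -/

import Mathlib

open MeasureTheory Metric
open scoped ENNReal

noncomputable section

/-- Euclidean space `ℝ^d`. -/
abbrev Euc (d : ℕ) := EuclideanSpace ℝ (Fin d)

/-- The standard dyadic cube at scale `n` (side length `2^{-n}`) indexed by `m`. -/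
def dyadicCube (d : ℕ) (n : ℤ) (m : Fin d → ℤ) : Set (Euc d) :=
  {y | ∀ j, (m j : ℝ) * 2 ^ (-n) ≤ y j ∧ y j < ((m j : ℝ) + 1) * 2 ^ (-n)}

/-- Index of the dyadic cube at scale `n` containing `x`. -/
def dyadicIdx (d : ℕ) (n : ℤ) (x : Euc d) : Fin d → ℤ :=
  fun j => ⌊(2 : ℝ) ^ n * x j⌋

/-- Dyadic conditional expectation at scale `2^{-n}`. -/
def Ek (d : ℕ) (n : ℤ) (h : Euc d → ℝ) (x : Euc d) : ℝ :=
  (2 : ℝ) ^ (n * d) * ∫ y in dyadicCube d n (dyadicIdx d n x), h y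

/-- Average over the Euclidean ball of radius `2^{-k}` centered at `x`. -/
def Mk (d : ℕ) (k : ℤ) (h : Euc d → ℝ) (x : Euc d) : ℝ :=
  ((volume (ball (0 : Euc d) ((2 : ℝ) ^ (-k)))).toReal)⁻¹ *
    ∫ y in ball x ((2 : ℝ) ^ (-k)), h y

/-- Indices of dyadic cubes at scale `n` meeting the boundary of the ball `B(x, 2^{-k})`. -/
def bdryIdx (d : ℕ) (k n : ℤ) (x : Euc d) : Set (Fin d → ℤ) :=
  {m | (dyadicCube d n m ∩ frontier (ball x ((2 : ℝ) ^ (-k)))).Nonempty}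

/-- `𝓘(B_k + x, n)`: union over boundary cubes `Q` at scale `n` of `Q ∩ B(x,2^{-k})`. -/
def Ikn (d : ℕ) (k n : ℤ) (x : Euc d) : Set (Euc d) :=
  ⋃ m ∈ bdryIdx d k n x, dyadicCube d n m ∩ ball x ((2 : ℝ) ^ (-k))

/-- The operator `M_{k,n}`. -/
def Mkn (d : ℕ) (k n : ℤ) (h : Euc d → ℝ) (x : Euc d) : ℝ :=
  ((volume (ball (0 : Euc d) ((2 : ℝ) ^ (-k)))).toReal)⁻¹ * ∫ y in Ikn d k n x, h y

/-- The concentric dilation `iQ` of the dyadic cube at scale `n` indexed by `m`. -/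
def cubeDil (d : ℕ) (i : ℕ) (n : ℤ) (m : Fin d → ℤ) : Set (Euc d) :=
  {y | ∀ j, ((m j : ℝ) + 1 / 2) * 2 ^ (-n) - (i : ℝ) * 2 ^ (-n) / 2 ≤ y j ∧
      y j < ((m j : ℝ) + 1 / 2) * 2 ^ (-n) + (i : ℝ) * 2 ^ (-n) / 2}

lemma measurableSet_dyadicCube (d : ℕ) (n : ℤ) (m : Fin d → ℤ) :
    MeasurableSet (dyadicCube d n m) := by
  have : dyadicCube d n m = ⋂ j, (fun y : Euc d => y j) ⁻¹'
      Set.Ico ((m j : ℝ) * 2 ^ (-n)) (((m j : ℝ) + 1) * 2 ^ (-n)) := by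
    ext y; simp [dyadicCube, Set.mem_Ico]
  rw [this]
  exact MeasurableSet.iInter fun j => ((measurable_pi_apply j).comp (WithLp.measurable_ofLp 2 (Fin d → ℝ))) measurableSet_Ico

lemma volume_dyadicCube (d : ℕ) (n : ℤ) (m : Fin d → ℤ) :
    volume (dyadicCube d n m) = ENNReal.ofReal (((2:ℝ) ^ (-n)) ^ d) := by
  have hE := EuclideanSpace.volume_preserving_symm_measurableEquiv_toLp (Fin d)
  have hpre : dyadicCube d n m = (MeasurableEquiv.toLp 2 (Fin d → ℝ)).symm ⁻¹'
      (Set.univ.pi fun j => Set.Ico ((m j : ℝ) * 2 ^ (-n)) (((m j : ℝ) + 1) * 2 ^ (-n))) := by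
    ext y
    simp [dyadicCube, Set.mem_pi, Set.mem_Ico]
  rw [hpre, hE.measure_preimage]
  · rw [volume_pi_pi]
    simp only [Real.volume_Ico]
    have : ∀ j : Fin d, ((m j : ℝ) + 1) * 2 ^ (-n) - (m j : ℝ) * 2 ^ (-n) = 2 ^ (-n) := by
      intro j; ring
    simp_rw [this]
    rw [Finset.prod_const, ← ENNReal.ofReal_pow (by positivity)]
    simp
  · exact (MeasurableSet.univ_pi fun j => measurableSet_Ico).nullMeasurableSet

lemma dyadicIdx_eq_of_mem {d : ℕ} {n : ℤ} {m : Fin d → ℤ} {y : Euc d}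
    (hy : y ∈ dyadicCube d n m) : dyadicIdx d n y = m := by
  funext j
  have h1 := (hy j).1
  have h2 := (hy j).2
  have hpow : (0:ℝ) < 2 ^ (n:ℤ) := by positivity
  have hinv : ((2:ℝ) ^ (-n)) = ((2:ℝ)^(n:ℤ))⁻¹ := by rw [zpow_neg]
  rw [hinv] at h1 h2
  have hl : (m j : ℝ) ≤ 2 ^ (n:ℤ) * y j := by
    rw [mul_comm]
    calc (m j : ℝ) = (m j) * ((2:ℝ)^(n:ℤ))⁻¹ * 2^(n:ℤ) := by field_simp
    _ ≤ y j * 2^(n:ℤ) := mul_le_mul_of_nonneg_right h1 hpow.le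
  have hr : 2 ^ (n:ℤ) * y j < (m j : ℝ) + 1 := by
    rw [mul_comm]
    calc y j * 2^(n:ℤ) < ((m j : ℝ) + 1) * ((2:ℝ)^(n:ℤ))⁻¹ * 2^(n:ℤ) :=
          mul_lt_mul_of_pos_right h2 hpow
    _ = (m j : ℝ) + 1 := by field_simp
  exact Int.floor_eq_iff.mpr ⟨by exact_mod_cast hl, by exact_mod_cast hr⟩

lemma dyadicCube_pairwiseDisjoint (d : ℕ) (n : ℤ) (s : Set (Fin d → ℤ)) :
    s.PairwiseDisjoint (dyadicCube d n) := by
  intro a _ b _ hab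
  refine Set.disjoint_left.mpr fun y hya hyb => hab ?_
  rw [← dyadicIdx_eq_of_mem hya, ← dyadicIdx_eq_of_mem hyb]

lemma dist_le_of_mem_dyadicCube {d : ℕ} {n : ℤ} {m : Fin d → ℤ} {y z : Euc d}
    (hy : y ∈ dyadicCube d n m) (hz : z ∈ dyadicCube d n m) :
    dist y z ≤ Real.sqrt d * 2 ^ (-n) := by
  rw [EuclideanSpace.dist_eq]
  have hb : ∀ j, dist (y j) (z j) ^ 2 ≤ ((2:ℝ) ^ (-n)) ^ 2 := by
    intro j
    have h1 := hy j; have h2 := hz j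
    have : |y j - z j| ≤ 2 ^ (-n) := by
      rw [abs_sub_le_iff]
      constructor <;> nlinarith [h1.1, h1.2, h2.1, h2.2]
    calc dist (y j) (z j) ^ 2 = |y j - z j| ^ 2 := by rw [Real.dist_eq]
    _ ≤ ((2:ℝ)^(-n))^2 := pow_le_pow_left₀ (abs_nonneg _) this 2
  calc Real.sqrt (∑ j, dist (y j) (z j) ^ 2) ≤ Real.sqrt (∑ _j : Fin d, ((2:ℝ)^(-n))^2) :=
        Real.sqrt_le_sqrt (Finset.sum_le_sum fun j _ => hb j)
  _ = Real.sqrt (d * ((2:ℝ)^(-n))^2) := by rw [Finset.sum_const]; simp [mul_comm]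
  _ = Real.sqrt d * 2 ^ (-n) := by
      rw [Real.sqrt_mul (by positivity)]
      congr 1
      exact Real.sqrt_sq (by positivity)

lemma measurable_Ek (d : ℕ) (n : ℤ) (h : Euc d → ℝ) : Measurable (Ek d n h) := by
  have : Ek d n h = (fun m : Fin d → ℤ => (2 : ℝ) ^ (n * d) * ∫ y in dyadicCube d n m, h y)
      ∘ (dyadicIdx d n) := rfl
  rw [this]
  apply (measurable_of_countable _).comp
  apply measurable_pi_lambda
  intro j
  have hj : Measurable fun y : Euc d => (2:ℝ) ^ n * y j :=
    ((measurable_pi_apply j).comp (WithLp.measurable_ofLp 2 (Fin d → ℝ)) : Measurable fun y : Euc d => y j).const_mul _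
  exact hj.floor

lemma Ek_nonneg {d : ℕ} {n : ℤ} {h : Euc d → ℝ} (hh : ∀ x, 0 ≤ h x) (x : Euc d) :
    0 ≤ Ek d n h x :=
  mul_nonneg (by positivity)
    (setIntegral_nonneg (measurableSet_dyadicCube d n _) fun y _ => hh y)

lemma integrableOn_cube {d : ℕ} {n : ℤ} {h : Euc d → ℝ} {p : ℝ≥0∞} (hp : 1 ≤ p)
    (hmem : MemLp h p volume) (m : Fin d → ℤ) : IntegrableOn h (dyadicCube d n m) volume := by
  have hfin : volume (dyadicCube d n m) < ∞ := by
    rw [volume_dyadicCube]; exact ENNReal.ofReal_lt_top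
  haveI : Fact (volume (dyadicCube d n m) < ∞) := ⟨hfin⟩
  exact (hmem.restrict _).integrable hp

lemma cube_lintegral_eq {d : ℕ} {n : ℤ} {h : Euc d → ℝ} (m : Fin d → ℤ)
    (hint : IntegrableOn h (dyadicCube d n m) volume) (hpos : ∀ x, 0 ≤ h x) :
    ∫⁻ y in dyadicCube d n m, ENNReal.ofReal (h y) =
      ∫⁻ y in dyadicCube d n m, ENNReal.ofReal (Ek d n h y) := by
  set Q := dyadicCube d n m with hQ
  have hL : ∫⁻ y in Q, ENNReal.ofReal (h y) = ENNReal.ofReal (∫ y in Q, h y) :=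
    (ofReal_integral_eq_lintegral_ofReal hint
      (Filter.Eventually.of_forall fun y => hpos y)).symm
  have hconst : ∀ y ∈ Q, ENNReal.ofReal (Ek d n h y) =
      ENNReal.ofReal ((2:ℝ)^(n*(d:ℤ)) * ∫ w in Q, h w) := by
    intro y hy
    unfold Ek
    rw [dyadicIdx_eq_of_mem hy]
  rw [hL, setLIntegral_congr_fun (measurableSet_dyadicCube d n m)
    hconst, setLIntegral_const, volume_dyadicCube]
  have hI : 0 ≤ ∫ w in Q, h w :=
    setIntegral_nonneg (measurableSet_dyadicCube d n m) fun y _ => hpos y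
  rw [← ENNReal.ofReal_mul (by positivity)]
  congr 1
  have hpow : ((2:ℝ) ^ (-n)) ^ d = (2:ℝ) ^ ((-n) * (d:ℤ)) := by
    rw [← zpow_natCast ((2:ℝ)^(-n)) d, ← zpow_mul]
  rw [hpow, mul_comm ((2:ℝ)^(n*(d:ℤ))), mul_assoc,
    ← zpow_add₀ (two_ne_zero : (2:ℝ) ≠ 0)]
  simp

lemma Ikn_subset {d : ℕ} {k n : ℤ} (x : Euc d) :
    Ikn d k n x ⊆ ⋃ m ∈ bdryIdx d k n x, dyadicCube d n m :=
  Set.iUnion₂_mono fun _ _ => Set.inter_subset_left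

lemma biUnion_subset_annulus {d : ℕ} (hd : 0 < d) {k n : ℤ} (x : Euc d) :
    (⋃ m ∈ bdryIdx d k n x, dyadicCube d n m) ⊆
      closedBall x ((2:ℝ)^(-k) + Real.sqrt d * 2^(-n)) \
        ball x ((2:ℝ)^(-k) - Real.sqrt d * 2^(-n)) := by
  haveI : Nonempty (Fin d) := ⟨⟨0, hd⟩⟩
  intro y hy
  rw [Set.mem_iUnion₂] at hy
  obtain ⟨m, hm, hyQ⟩ := hy
  obtain ⟨z, hzQ, hzF⟩ := hm
  rw [frontier_ball x (by positivity : (2:ℝ)^(-k) ≠ 0)] at hzF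
  have hzx : dist z x = (2:ℝ)^(-k) := mem_sphere.mp hzF
  have hyz : dist y z ≤ Real.sqrt d * 2 ^ (-n) := dist_le_of_mem_dyadicCube hyQ hzQ
  constructor
  · rw [mem_closedBall]
    calc dist y x ≤ dist y z + dist z x := dist_triangle y z x
    _ ≤ Real.sqrt d * 2^(-n) + (2:ℝ)^(-k) := by linarith
    _ = (2:ℝ)^(-k) + Real.sqrt d * 2^(-n) := by ring
  · rw [mem_ball]
    push_neg
    have := dist_triangle z y x
    have hzy : dist z y = dist y z := dist_comm z y
    linarith

set_option maxHeartbeats 1000000 in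
lemma ptwise_bound {d : ℕ} (hd : 0 < d) {k n : ℤ} {h : Euc d → ℝ} {p : ℝ≥0∞} (hp : 1 ≤ p)
    (hmem : MemLp h p volume) (hpos : ∀ x, 0 ≤ h x) (x : Euc d) :
    ENNReal.ofReal (Mkn d k n h x) ≤
      (volume (ball (0 : Euc d) ((2:ℝ)^(-k))))⁻¹ *
        ∫⁻ z in closedBall (0:Euc d) ((2:ℝ)^(-k) + Real.sqrt d * 2^(-n)) \
            ball (0:Euc d) ((2:ℝ)^(-k) - Real.sqrt d * 2^(-n)),
          ENNReal.ofReal (Ek d n h (x + z)) := by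
  set r : ℝ := (2:ℝ)^(-k) with hr
  set s : ℝ := Real.sqrt d * 2^(-n) with hs
  set B : Set (Euc d) := ball (0 : Euc d) r with hB
  have hBpos : 0 < volume B := measure_ball_pos _ _ (by positivity)
  have hBfin : volume B < ∞ := measure_ball_lt_top
  have hcpos : 0 < (volume B).toReal := ENNReal.toReal_pos hBpos.ne' hBfin.ne
  set L : ℝ≥0∞ := ∫⁻ y in Ikn d k n x, ENNReal.ofReal (h y) with hL
  have hMval : Mkn d k n h x = ((volume B).toReal)⁻¹ * L.toReal := by
    unfold Mkn
    congr 1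
    exact integral_eq_lintegral_of_nonneg_ae
      (Filter.Eventually.of_forall fun y => hpos y) (hmem.aestronglyMeasurable.restrict)
  -- the chain of lintegral inequalities
  set T : ℝ≥0∞ := ∫⁻ z in closedBall (0:Euc d) (r + s) \ ball (0:Euc d) (r - s),
      ENNReal.ofReal (Ek d n h (x + z)) with hT
  have hchain : L ≤ T := by
    have h1 : L ≤ ∫⁻ y in ⋃ m ∈ bdryIdx d k n x, dyadicCube d n m, ENNReal.ofReal (h y) :=
      lintegral_mono_set (Ikn_subset x)
    have h2 : ∫⁻ y in ⋃ m ∈ bdryIdx d k n x, dyadicCube d n m, ENNReal.ofReal (h y)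
        = ∫⁻ y in ⋃ m ∈ bdryIdx d k n x, dyadicCube d n m, ENNReal.ofReal (Ek d n h y) := by
      have e1 := lintegral_biUnion (μ := (volume : Measure (Euc d)))
        (t := bdryIdx d k n x) (s := dyadicCube d n) (Set.to_countable _)
        (fun m _ => measurableSet_dyadicCube d n m) (dyadicCube_pairwiseDisjoint d n _)
        (fun y => ENNReal.ofReal (h y))
      have e2 := lintegral_biUnion (μ := (volume : Measure (Euc d)))
        (t := bdryIdx d k n x) (s := dyadicCube d n) (Set.to_countable _)
        (fun m _ => measurableSet_dyadicCube d n m) (dyadicCube_pairwiseDisjoint d n _)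
        (fun y => ENNReal.ofReal (Ek d n h y))
      rw [e1, e2]
      apply tsum_congr
      intro m
      exact cube_lintegral_eq m.1 (integrableOn_cube hp hmem m.1) hpos
    have h3 : ∫⁻ y in ⋃ m ∈ bdryIdx d k n x, dyadicCube d n m, ENNReal.ofReal (Ek d n h y)
        ≤ ∫⁻ y in closedBall x (r + s) \ ball x (r - s), ENNReal.ofReal (Ek d n h y) :=
      lintegral_mono_set (biUnion_subset_annulus hd x)
    have h4 : ∫⁻ y in closedBall x (r + s) \ ball x (r - s), ENNReal.ofReal (Ek d n h y) = T := by
      have hpre : (fun z : Euc d => x + z) ⁻¹' (closedBall x (r+s) \ ball x (r-s)) =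
          closedBall (0 : Euc d) (r+s) \ ball (0 : Euc d) (r-s) := by
        ext z
        simp [mem_closedBall, mem_ball, dist_eq_norm]
      rw [hT, ← hpre]
      exact ((measurePreserving_add_left volume x).setLIntegral_comp_preimage_emb
        (MeasurableEquiv.addLeft x).measurableEmbedding _ _).symm
    calc L ≤ _ := h1
    _ = _ := h2
    _ ≤ _ := h3
    _ = T := h4
  rw [hMval, ENNReal.ofReal_mul (by positivity)]
  calc ENNReal.ofReal ((volume B).toReal)⁻¹ * ENNReal.ofReal L.toReal
      ≤ (volume B)⁻¹ * L := by
        apply mul_le_mul'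
        · rw [ENNReal.ofReal_inv_of_pos hcpos, ENNReal.ofReal_toReal hBfin.ne]
        · exact ENNReal.ofReal_toReal_le
  _ ≤ (volume B)⁻¹ * T := mul_le_mul_right hchain _

lemma pow_sub_pow_le_aux {a b : ℝ} (hb : 0 ≤ b) (hab : b ≤ a) (D : ℕ) :
    a^D - b^D ≤ D * a^(D-1) * (a - b) := by
  induction D with
  | zero => simp
  | succ D ih =>
    have ha : 0 ≤ a := hb.trans hab
    have h1 : a^(D+1) - b^(D+1) = a*(a^D - b^D) + b^D*(a-b) := by ring
    have h2 : a*(a^D - b^D) ≤ a * (D * a^(D-1) * (a-b)) := mul_le_mul_of_nonneg_left ih ha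
    have h3 : a * ((D:ℝ) * a^(D-1) * (a-b)) ≤ D * a^D * (a-b) := by
      rcases Nat.eq_zero_or_pos D with hD | hD
      · subst hD; simp
      · have hD1 : D - 1 + 1 = D := Nat.succ_pred_eq_of_pos hD
        have : a * a^(D-1) = a^D := by
          rw [← pow_succ']
          rw [hD1]
        have heq : a * ((D:ℝ) * a^(D-1) * (a-b)) = (D:ℝ) * a^D * (a-b) := by
          rw [← this]; ring
        rw [heq]
    have h4 : b^D*(a-b) ≤ a^D*(a-b) :=
      mul_le_mul_of_nonneg_right (pow_le_pow_left₀ hb hab D) (by linarith)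
    have hD1 : (D+1) - 1 = D := rfl
    rw [h1, hD1]
    push_cast
    linarith

lemma annulus_vol {d : ℕ} (hd : 0 < d) {k n : ℤ} (hkn : k < n) :
    volume (closedBall (0:Euc d) ((2:ℝ)^(-k) + Real.sqrt d * 2^(-n)) \
        ball (0:Euc d) ((2:ℝ)^(-k) - Real.sqrt d * 2^(-n)))
      ≤ ENNReal.ofReal ((2*(d:ℝ)^2*(1+(d:ℝ))^(d-1)) * 2^(k-n)) *
        volume (ball (0:Euc d) ((2:ℝ)^(-k))) := by
  haveI : Nonempty (Fin d) := ⟨⟨0, hd⟩⟩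
  set r : ℝ := (2:ℝ)^(-k) with hrdef
  set δ : ℝ := (2:ℝ)^(-n) with hδdef
  set s : ℝ := Real.sqrt d * δ with hsdef
  have hr0 : 0 < r := by positivity
  have hδ0 : 0 < δ := by positivity
  have hδr : δ ≤ r := by
    rw [hrdef, hδdef]
    apply zpow_le_zpow_right₀ one_le_two (by omega)
  have hd1 : (1:ℝ) ≤ d := by exact_mod_cast hd
  have hsqd : Real.sqrt d ≤ d := by
    nlinarith [Real.sq_sqrt (by positivity : (0:ℝ) ≤ d), Real.sqrt_nonneg (d:ℝ)]
  have hs0 : 0 ≤ s := by positivity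
  have hsd : s ≤ d * r := by
    rw [hsdef]
    calc Real.sqrt d * δ ≤ (d:ℝ) * δ := mul_le_mul_of_nonneg_right hsqd hδ0.le
    _ ≤ d * r := mul_le_mul_of_nonneg_left hδr (by positivity)
  set b : ℝ := max (r - s) 0 with hbdef
  have hb0 : 0 ≤ b := le_max_right _ _
  have hba : b ≤ r + s := by
    rw [hbdef]; apply max_le <;> nlinarith
  have hball : ball (0:Euc d) (r - s) = ball (0:Euc d) b := by
    rcases le_or_gt 0 (r - s) with hc | hc
    · rw [hbdef, max_eq_left hc]
    · rw [ball_eq_empty.mpr hc.le, eq_comm, ball_eq_empty]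
      rw [hbdef, max_eq_right hc.le]
  have hfr : Module.finrank ℝ (Euc d) = d := finrank_euclideanSpace_fin
  have hU : volume (ball (0:Euc d) (1:ℝ)) ≠ ∞ := measure_ball_lt_top.ne
  -- compute the volume of the annulus
  have hdiff : volume (closedBall (0:Euc d) (r + s) \ ball (0:Euc d) (r - s))
      = ENNReal.ofReal ((r+s)^d - b^d) * volume (ball (0:Euc d) (1:ℝ)) := by
    rw [hball, measure_diff ((ball_subset_ball hba).trans ball_subset_closedBall)
      measurableSet_ball.nullMeasurableSet measure_ball_lt_top.ne,
      Measure.addHaar_closedBall _ _ (by positivity), Measure.addHaar_ball _ _ hb0, hfr,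
      ENNReal.ofReal_sub _ (by positivity), ENNReal.sub_mul (fun _ _ => hU)]
  rw [hdiff, Measure.addHaar_ball _ _ hr0.le, hfr]
  -- the key real inequality
  have hkey : (r+s)^d - b^d ≤ (2*(d:ℝ)^2*(1+(d:ℝ))^(d-1)) * 2^(k-n) * r^d := by
    have h2kn : (2:ℝ)^(k-n) * r = δ := by
      rw [hrdef, hδdef, ← zpow_add₀ (two_ne_zero : (2:ℝ) ≠ 0)]
      congr 1; ring
    have h1 : (r+s)^d - b^d ≤ d * (r+s)^(d-1) * ((r+s) - b) :=
      pow_sub_pow_le_aux hb0 hba d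
    have h2 : (r+s) - b ≤ 2*s := by
      have : r - s ≤ b := le_max_left _ _
      linarith
    have h3 : (r+s)^(d-1) ≤ ((1+(d:ℝ))*r)^(d-1) := by
      apply pow_le_pow_left₀ (by positivity)
      nlinarith
    have h4 : (d:ℝ) * (r+s)^(d-1) * ((r+s) - b) ≤ (d:ℝ) * (((1+(d:ℝ))*r)^(d-1)) * (2*s) := by
      apply mul_le_mul
      · exact mul_le_mul_of_nonneg_left h3 (by positivity)
      · exact h2
      · nlinarith
      · positivity
    have h5 : (d:ℝ) * (((1+(d:ℝ))*r)^(d-1)) * (2*s) ≤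
        (2*(d:ℝ)^2*(1+(d:ℝ))^(d-1)) * (δ * r^(d-1)) := by
      rw [mul_pow]
      have hs2 : 2 * s ≤ 2 * ((d:ℝ) * δ) := by
        have : s ≤ (d:ℝ) * δ := by
          rw [hsdef]; exact mul_le_mul_of_nonneg_right hsqd hδ0.le
        linarith
      calc (d:ℝ) * ((1+(d:ℝ))^(d-1) * r^(d-1)) * (2*s)
          ≤ (d:ℝ) * ((1+(d:ℝ))^(d-1) * r^(d-1)) * (2*((d:ℝ)*δ)) := by
            apply mul_le_mul_of_nonneg_left hs2 (by positivity)
      _ = (2*(d:ℝ)^2*(1+(d:ℝ))^(d-1)) * (δ * r^(d-1)) := by ring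
    have h6 : δ * r^(d-1) = 2^(k-n) * r^d := by
      rw [← h2kn]
      have : r^(d-1) * r = r^d := by
        rw [← pow_succ]
        congr 1
        omega
      calc ((2:ℝ)^(k-n) * r) * r^(d-1) = 2^(k-n) * (r^(d-1) * r) := by ring
      _ = 2^(k-n) * r^d := by rw [this]
    calc (r+s)^d - b^d ≤ _ := h1
    _ ≤ _ := h4
    _ ≤ (2*(d:ℝ)^2*(1+(d:ℝ))^(d-1)) * (δ * r^(d-1)) := h5
    _ = (2*(d:ℝ)^2*(1+(d:ℝ))^(d-1)) * 2^(k-n) * r^d := by rw [h6]; ring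
  calc ENNReal.ofReal ((r+s)^d - b^d) * volume (ball (0:Euc d) (1:ℝ))
      ≤ ENNReal.ofReal ((2*(d:ℝ)^2*(1+(d:ℝ))^(d-1)) * 2^(k-n) * r^d) *
        volume (ball (0:Euc d) (1:ℝ)) :=
        mul_le_mul_left (ENNReal.ofReal_le_ofReal hkey) _
  _ = ENNReal.ofReal ((2*(d:ℝ)^2*(1+(d:ℝ))^(d-1)) * 2^(k-n)) *
      (ENNReal.ofReal (r^d) * volume (ball (0:Euc d) (1:ℝ))) := by
      rw [← mul_assoc, ← ENNReal.ofReal_mul (by positivity)]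
lemma jensen_step {d : ℕ} (u : Euc d → ℝ≥0∞) (hu : Measurable u) {A : Set (Euc d)}
    (hA : MeasurableSet A) {q : ℝ} (hq : 1 ≤ q) :
    (∫⁻ z in A, u z) ^ q ≤ (volume A) ^ (q - 1) * ∫⁻ z in A, (u z) ^ q := by
  rcases eq_or_lt_of_le hq with hq1 | hq1
  · subst hq1
    simp
  · have hq0 : q ≠ 0 := by linarith
    set q' := Real.conjExponent q with hq'def
    have hcon : q.HolderConjugate q' := Real.HolderConjugate.conjExponent hq1
    have := ENNReal.lintegral_mul_le_Lp_mul_Lq (volume.restrict A)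
      hcon hu.aemeasurable (aemeasurable_const (b := (1:ℝ≥0∞)))
    simp only [Pi.mul_apply, mul_one, ENNReal.one_rpow, lintegral_const,
      Measure.restrict_apply MeasurableSet.univ, Set.univ_inter, one_mul] at this
    calc (∫⁻ z in A, u z) ^ q
        ≤ ((∫⁻ z in A, u z ^ q) ^ (1/q) * (volume A) ^ (1/q')) ^ q :=
          ENNReal.rpow_le_rpow this (by linarith)
    _ = (∫⁻ z in A, u z ^ q) * (volume A) ^ (q/q') := by
        rw [ENNReal.mul_rpow_of_nonneg _ _ (by linarith), ← ENNReal.rpow_mul,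
          ← ENNReal.rpow_mul, one_div, inv_mul_cancel₀ hq0, ENNReal.rpow_one,
          one_div, inv_mul_eq_div]
    _ = (volume A) ^ (q - 1) * ∫⁻ z in A, u z ^ q := by
        rw [mul_comm]
        congr 1
        congr 1
        have h1 : 1/q + 1/q' = 1 := by
          have := hcon.inv_add_inv_eq_one
          simpa [one_div] using this
        have hq'0 : q' ≠ 0 := hcon.symm.ne_zero
        field_simp at h1 ⊢
        nlinarith [h1]

lemma lint_convol {d : ℕ} (g : Euc d → ℝ≥0∞) (hg : Measurable g) {A : Set (Euc d)}
    (hA : MeasurableSet A) (hAfin : volume A ≠ ∞) {q : ℝ} (hq : 1 ≤ q) :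
    ∫⁻ x, (∫⁻ z in A, g (x + z)) ^ q ≤ (volume A) ^ q * ∫⁻ x, (g x) ^ q := by
  have hq0 : (0:ℝ) < q := by linarith
  by_cases hA0 : volume A = 0
  · have hz : ∀ x : Euc d, (∫⁻ z in A, g (x + z)) = 0 := by
      intro x
      rw [Measure.restrict_eq_zero.mpr hA0, lintegral_zero_measure]
    simp [hz, ENNReal.zero_rpow_of_pos hq0]
  have step1 : ∀ x, (∫⁻ z in A, g (x + z)) ^ q ≤ (volume A)^(q-1) * ∫⁻ z in A, (g (x + z))^q :=
    fun x => jensen_step (fun z => g (x + z)) (hg.comp (measurable_const_add x)) hA hq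
  calc ∫⁻ x, (∫⁻ z in A, g (x + z)) ^ q
      ≤ ∫⁻ x, (volume A)^(q-1) * ∫⁻ z in A, (g (x + z))^q := lintegral_mono step1
  _ = (volume A)^(q-1) * ∫⁻ x, ∫⁻ z in A, (g (x + z))^q :=
      lintegral_const_mul' _ _ (ENNReal.rpow_ne_top_of_nonneg (by linarith) hAfin)
  _ = (volume A)^(q-1) * ∫⁻ z in A, ∫⁻ x, (g (x + z))^q := by
      rw [lintegral_lintegral_swap]
      exact ((hg.comp measurable_add).pow_const _).aemeasurable
  _ = (volume A)^(q-1) * ∫⁻ z in A, ∫⁻ x, (g x)^q := by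
      congr 1
      refine setLIntegral_congr_fun hA (fun z _ => ?_)
      exact lintegral_add_right_eq_self (fun x => g x ^ q) z
  _ = (volume A)^(q-1) * ((∫⁻ x, (g x)^q) * volume A) := by
      rw [setLIntegral_const]
  _ = (volume A) ^ q * ∫⁻ x, (g x) ^ q := by
      rw [← mul_assoc, mul_comm ((volume A)^(q-1)), mul_assoc, mul_comm]
      congr 1
      have h2 : volume A ^ ((q-1) + 1) = volume A ^ (q-1) * volume A ^ (1:ℝ) :=
        ENNReal.rpow_add _ _ hA0 hAfin
      rw [ENNReal.rpow_one] at h2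
      rw [← h2]
      norm_num

lemma measurableSet_Ikn (d : ℕ) (k n : ℤ) (x : Euc d) : MeasurableSet (Ikn d k n x) :=
  MeasurableSet.biUnion (Set.to_countable _)
    (fun m _ => (measurableSet_dyadicCube d n m).inter measurableSet_ball)

lemma Mkn_nonneg {d : ℕ} {k n : ℤ} {h : Euc d → ℝ} (hpos : ∀ x, 0 ≤ h x) (x : Euc d) :
    0 ≤ Mkn d k n h x :=
  mul_nonneg (inv_nonneg.mpr ENNReal.toReal_nonneg)
    (setIntegral_nonneg (measurableSet_Ikn d k n x) fun y _ => hpos y)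


set_option maxHeartbeats 1000000 in
/-- For nonnegative `h`, `‖M_{k,n} h‖_p ≤ C_d 2^{k-n} ‖𝖤_n h‖_p`. -/
theorem Mkn_Lp_bound_pos (d : ℕ) (hd : 0 < d) :
    ∃ C : ℝ, 0 < C ∧ ∀ (k n : ℤ), k < n → ∀ (p : ℝ≥0∞), 1 ≤ p →
      ∀ h : Euc d → ℝ, MemLp h p volume → (∀ x, 0 ≤ h x) →
        eLpNorm (Mkn d k n h) p volume ≤
          ENNReal.ofReal (C * 2 ^ (k - n)) * eLpNorm (Ek d n h) p volume := by
  refine ⟨2*(d:ℝ)^2*(1+(d:ℝ))^(d-1), by positivity, ?_⟩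
  intro k n hkn p hp1 h hmem hpos
  set C : ℝ := 2*(d:ℝ)^2*(1+(d:ℝ))^(d-1) with hC
  set r : ℝ := (2:ℝ)^(-k) with hrdef
  set s : ℝ := Real.sqrt d * 2^(-n) with hsdef
  set B : Set (Euc d) := ball (0:Euc d) r with hBdef
  set A : Set (Euc d) := closedBall (0:Euc d) (r+s) \ ball (0:Euc d) (r-s) with hAdef
  set g : Euc d → ℝ≥0∞ := fun y => ENNReal.ofReal (Ek d n h y) with hgdef
  have hgmeas : Measurable g := ENNReal.measurable_ofReal.comp (measurable_Ek d n h)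
  have hAmeas : MeasurableSet A := measurableSet_closedBall.diff measurableSet_ball
  have hAfin : volume A ≠ ∞ :=
    ((measure_mono Set.diff_subset).trans_lt measure_closedBall_lt_top).ne
  have hBpos : volume B ≠ 0 := (measure_ball_pos _ _ (by positivity)).ne'
  have hBfin : volume B ≠ ∞ := measure_ball_lt_top.ne
  have hpt : ∀ x, ‖Mkn d k n h x‖ₑ ≤ (volume B)⁻¹ * ∫⁻ z in A, g (x+z) := by
    intro x
    have hP := ptwise_bound hd (k := k) (n := n) hp1 hmem hpos x
    rwa [Real.enorm_eq_ofReal (Mkn_nonneg hpos x)]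
  have hratio : (volume B)⁻¹ * volume A ≤ ENNReal.ofReal (C * 2^(k-n)) := by
    have h1 := annulus_vol hd hkn
    calc (volume B)⁻¹ * volume A
        ≤ (volume B)⁻¹ * (ENNReal.ofReal (C*2^(k-n)) * volume B) := mul_le_mul_right h1 _
    _ = ENNReal.ofReal (C*2^(k-n)) * ((volume B)⁻¹ * volume B) := by ring
    _ = ENNReal.ofReal (C*2^(k-n)) := by rw [ENNReal.inv_mul_cancel hBpos hBfin, mul_one]
  have hEk : ∀ y, ‖Ek d n h y‖ₑ = g y := fun y =>
    Real.enorm_eq_ofReal (Ek_nonneg hpos y)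
  by_cases hptop : p = ∞
  · subst hptop
    rw [eLpNorm_exponent_top, eLpNorm_exponent_top]
    have hFb : ∀ x, (∫⁻ z in A, g (x+z)) ≤ essSup g volume * volume A := by
      intro x
      have hae : ∀ᵐ z ∂(volume.restrict A), g (x+z) ≤ essSup g volume := by
        apply ae_restrict_of_ae
        have h0 := ENNReal.ae_le_essSup (μ := volume) g
        rw [ae_iff] at h0 ⊢
        have hset : {z : Euc d | ¬ g (x+z) ≤ essSup g volume} =
            (fun z => x + z) ⁻¹' {w | ¬ g w ≤ essSup g volume} := rfl
        rw [hset, (measurePreserving_add_left volume x).measure_preimage]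
        · exact h0
        · have hseteq : {w : Euc d | ¬ g w ≤ essSup g volume} =
              {w | essSup g volume < g w} := by ext w; simp [not_le]
          rw [hseteq]
          exact (measurableSet_lt measurable_const hgmeas).nullMeasurableSet
      calc (∫⁻ z in A, g (x+z)) ≤ ∫⁻ _z in A, essSup g volume := lintegral_mono_ae hae
      _ = essSup g volume * volume A := by rw [setLIntegral_const]
    have hbound : eLpNormEssSup (Mkn d k n h) volume ≤
        ENNReal.ofReal (C*2^(k-n)) * essSup g volume := by
      refine essSup_le_of_ae_le _ ?_
      apply Filter.Eventually.of_forall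
      intro x
      calc ‖Mkn d k n h x‖ₑ ≤ (volume B)⁻¹ * ∫⁻ z in A, g (x+z) := hpt x
      _ ≤ (volume B)⁻¹ * (essSup g volume * volume A) := mul_le_mul_right (hFb x) _
      _ = ((volume B)⁻¹ * volume A) * essSup g volume := by ring
      _ ≤ ENNReal.ofReal (C*2^(k-n)) * essSup g volume := mul_le_mul_left hratio _
    refine hbound.trans ?_
    apply mul_le_mul_right
    have heq : eLpNormEssSup (Ek d n h) volume = essSup g volume := by
      unfold eLpNormEssSup
      congr 1
      funext y
      exact hEk y
    rw [heq]
  · have hp0 : p ≠ 0 := (lt_of_lt_of_le zero_lt_one hp1).ne'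
    set q : ℝ := p.toReal with hqdef
    have hq1 : (1:ℝ) ≤ q := by
      rw [hqdef, ← ENNReal.toReal_one]
      exact ENNReal.toReal_mono hptop hp1
    have hq0 : q ≠ 0 := by linarith
    rw [eLpNorm_eq_lintegral_rpow_enorm_toReal hp0 hptop, eLpNorm_eq_lintegral_rpow_enorm_toReal hp0 hptop]
    have hEkint : ∫⁻ x, (‖Ek d n h x‖ₑ)^q = ∫⁻ x, (g x)^q :=
      lintegral_congr fun x => by rw [hEk x]
    rw [hEkint]
    have hmain : ∫⁻ x, (‖Mkn d k n h x‖ₑ)^q ≤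
        ((volume B)⁻¹ * volume A)^q * ∫⁻ x, (g x)^q := by
      calc ∫⁻ x, (‖Mkn d k n h x‖ₑ)^q
          ≤ ∫⁻ x, ((volume B)⁻¹ * ∫⁻ z in A, g (x+z))^q :=
            lintegral_mono fun x => ENNReal.rpow_le_rpow (hpt x) (by linarith)
      _ = ∫⁻ x, ((volume B)⁻¹)^q * (∫⁻ z in A, g (x+z))^q := by
            refine lintegral_congr fun x => ?_
            rw [ENNReal.mul_rpow_of_nonneg _ _ (by linarith)]
      _ = ((volume B)⁻¹)^q * ∫⁻ x, (∫⁻ z in A, g (x+z))^q :=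
            lintegral_const_mul' _ _
              (ENNReal.rpow_ne_top_of_nonneg (by linarith) (ENNReal.inv_ne_top.mpr hBpos))
      _ ≤ ((volume B)⁻¹)^q * ((volume A)^q * ∫⁻ x, (g x)^q) :=
            mul_le_mul_right (lint_convol g hgmeas hAmeas hAfin hq1) _
      _ = ((volume B)⁻¹ * volume A)^q * ∫⁻ x, (g x)^q := by
            rw [ENNReal.mul_rpow_of_nonneg _ _ (by linarith), mul_assoc]
    calc (∫⁻ x, (‖Mkn d k n h x‖ₑ)^q)^(1/q)
        ≤ (((volume B)⁻¹ * volume A)^q * ∫⁻ x, (g x)^q)^(1/q) :=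
          ENNReal.rpow_le_rpow hmain (one_div_nonneg.mpr (by linarith))
    _ = ((volume B)⁻¹ * volume A) * (∫⁻ x, (g x)^q)^(1/q) := by
          rw [ENNReal.mul_rpow_of_nonneg _ _ (one_div_nonneg.mpr (by linarith)),
            ← ENNReal.rpow_mul, mul_one_div_cancel hq0, ENNReal.rpow_one]
    _ ≤ ENNReal.ofReal (C * 2^(k-n)) * (∫⁻ x, (g x)^q)^(1/q) := mul_le_mul_left hratio _
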